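/- Let D be a finite set and R = 𝔽₂[t_k : k ∈ D]/(t_k²). Fix J ⊆ D and set J̄ = D ∖ J. For L, L' ⊆ J define θ_{L,L'} = Σ_{M ⊆ J̄} e_{M∪L} ⊗ e_{(J̄∖M) ∪ (J∖L')} ∈ R ⊗ R, and θ_L = θ_{L,L}. Define composition of α, β ∈ R ⊗ R by (β ∘ α) = Σ over basis expansions using the pairing deg (coefficient of e_D): explicitly, if α = Σ e_A ⊗ e_B and β = Σ e_C ⊗ e_E, then β∘α = Σ deg(e_B e_C) · (e_A ⊗ e_E). Then for all L, L', N ⊆ J: θ_{L,N} ∘ θ_{L',L} = θ_{L',N}. In particular θ_{L'} ∘ θ_L = θ_L if L = L' and 0 otherwise, so the θ_L are pairwise orthogonal idempotents. -/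

import Mathlib

open MvPolynomial Finset

set_option synthInstance.maxHeartbeats 1000000
set_option maxHeartbeats 1000000

/-- The quotient ring 𝔽₂[t_k : k ∈ D]/(t_k²). -/
abbrev Rq (D : Type*) : Type _ :=
  MvPolynomial D (ZMod 2) ⧸
    Ideal.span (Set.range fun k : D => (X k : MvPolynomial D (ZMod 2)) ^ 2)

/-- The class of the square-free monomial ∏_{k ∈ I} t_k. -/
noncomputable def eMon {D : Type*} (I : Finset D) : Rq D :=
  Ideal.Quotient.mk _ (∏ k ∈ I, X k)

lemma eMon_mul {D : Type*} [DecidableEq D] (B C : Finset D) :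
    eMon (D := D) B * eMon C = if Disjoint B C then eMon (B ∪ C) else 0 := by
  unfold eMon
  rw [← map_mul]
  split_ifs with h
  · rw [← Finset.prod_union h]
  · rw [Finset.not_disjoint_iff] at h
    obtain ⟨k, hkB, hkC⟩ := h
    rw [Ideal.Quotient.eq_zero_iff_mem]
    have hx : (∏ i ∈ B, (X i : MvPolynomial D (ZMod 2))) * ∏ i ∈ C, X i
        = ((∏ i ∈ B.erase k, X i) * ∏ i ∈ C.erase k, X i) * X k ^ 2 := by
      rw [← Finset.prod_erase_mul B _ hkB, ← Finset.prod_erase_mul C _ hkC]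
      ring
    rw [hx]
    exact Ideal.mul_mem_left _ _ (Ideal.subset_span ⟨k, rfl⟩)

open scoped TensorProduct

/-- The projector θ_{L,L'} = Σ_{M ⊆ J̄} e_{M∪L} ⊗ e_{(J̄∖M) ∪ (J∖L')}. -/
noncomputable def theta {D : Type*} [Fintype D] [DecidableEq D]
    (J L L' : Finset D) : (Rq D) ⊗[ZMod 2] (Rq D) :=
  ∑ M ∈ (Jᶜ).powerset, eMon (M ∪ L) ⊗ₜ[ZMod 2] eMon ((Jᶜ \ M) ∪ (J \ L'))

/-- Composition rule θ_{L,N} ∘ θ_{L',L} = θ_{L',N} for the correspondences of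
Theorem 9.4; in particular the θ_L are pairwise orthogonal idempotents. -/
theorem theta_comp {D : Type*} [Fintype D] [DecidableEq D] (J : Finset D)
    (deg : Rq D →ₗ[ZMod 2] ZMod 2)
    (hdeg : ∀ I : Finset D, deg (eMon I) = if I = Finset.univ then 1 else 0)
    -- composition of correspondences: β ∘ α, bilinear, determined on monomials
    (comp : (Rq D) ⊗[ZMod 2] (Rq D) →ₗ[ZMod 2]
      (Rq D) ⊗[ZMod 2] (Rq D) →ₗ[ZMod 2] (Rq D) ⊗[ZMod 2] (Rq D))
    (hcomp : ∀ A B C E : Finset D,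
      comp (eMon C ⊗ₜ[ZMod 2] eMon E) (eMon A ⊗ₜ[ZMod 2] eMon B)
        = deg (eMon B * eMon C) • (eMon A ⊗ₜ[ZMod 2] eMon E)) :
    (∀ L L' N : Finset D, L ⊆ J → L' ⊆ J → N ⊆ J →
      comp (theta J L N) (theta J L' L) = theta J L' N) ∧
    (∀ L L' : Finset D, L ⊆ J → L' ⊆ J →
      comp (theta J L' L') (theta J L L)
        = if L = L' then theta J L L else 0) := by
  have key : ∀ P P' L' N : Finset D, P ⊆ J → P' ⊆ J → L' ⊆ J → N ⊆ J →
      comp (theta J P N) (theta J L' P') = if P = P' then theta J L' N else 0 := by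
    intro P P' L' N hP hP' hL' hN
    have hcond : ∀ M M' : Finset D, M ⊆ Jᶜ → M' ⊆ Jᶜ →
        (((Disjoint ((Jᶜ \ M') ∪ (J \ P')) (M ∪ P)) ∧
          ((Jᶜ \ M') ∪ (J \ P')) ∪ (M ∪ P) = Finset.univ) ↔ (M' = M ∧ P = P')) := by
      intro M M' hM hM'
      constructor
      · rintro ⟨hd, hu⟩
        have hd' := Finset.disjoint_left.mp hd
        rw [Finset.eq_univ_iff_forall] at hu
        constructor <;> ext x
        all_goals {
          have h1 := @hd' x
          have h2 := hu x
          have h3 : x ∈ M → x ∉ J := fun h => Finset.mem_compl.mp (hM h)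
          have h4 : x ∈ M' → x ∉ J := fun h => Finset.mem_compl.mp (hM' h)
          have h5 : x ∈ P → x ∈ J := fun h => hP h
          have h6 : x ∈ P' → x ∈ J := fun h => hP' h
          simp only [Finset.mem_union, Finset.mem_sdiff, Finset.mem_compl] at *
          tauto }
      · rintro ⟨rfl, rfl⟩
        constructor
        · rw [Finset.disjoint_left]
          intro x hx hx'
          have h3 : x ∈ M' → x ∉ J := fun h => Finset.mem_compl.mp (hM' h)
          have h5 : x ∈ P → x ∈ J := fun h => hP h
          simp only [Finset.mem_union, Finset.mem_sdiff, Finset.mem_compl] at *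
          tauto
        · rw [Finset.eq_univ_iff_forall]
          intro x
          have h3 : x ∈ M' → x ∉ J := fun h => Finset.mem_compl.mp (hM' h)
          simp only [Finset.mem_union, Finset.mem_sdiff, Finset.mem_compl]
          tauto
    unfold theta
    rw [map_sum comp, LinearMap.sum_apply]
    have step : ∀ M ∈ (Jᶜ).powerset,
        comp (eMon (M ∪ P) ⊗ₜ[ZMod 2] eMon ((Jᶜ \ M) ∪ (J \ N)))
          (∑ M' ∈ (Jᶜ).powerset,
            eMon (M' ∪ L') ⊗ₜ[ZMod 2] eMon ((Jᶜ \ M') ∪ (J \ P')))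
        = if P = P' then eMon (M ∪ L') ⊗ₜ[ZMod 2] eMon ((Jᶜ \ M) ∪ (J \ N))
          else 0 := by
      intro M hMmem
      rw [Finset.mem_powerset] at hMmem
      rw [map_sum]
      have hterm : ∀ M' ∈ (Jᶜ).powerset,
          comp (eMon (M ∪ P) ⊗ₜ[ZMod 2] eMon ((Jᶜ \ M) ∪ (J \ N)))
            (eMon (M' ∪ L') ⊗ₜ[ZMod 2] eMon ((Jᶜ \ M') ∪ (J \ P')))
          = (if M' = M ∧ P = P' then (1 : ZMod 2) else 0) •
              (eMon (M' ∪ L') ⊗ₜ[ZMod 2] eMon ((Jᶜ \ M) ∪ (J \ N))) := by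
        intro M' hM'mem
        rw [Finset.mem_powerset] at hM'mem
        rw [hcomp]
        congr 1
        rw [eMon_mul]
        by_cases hd : Disjoint ((Jᶜ \ M') ∪ (J \ P')) (M ∪ P)
        · rw [if_pos hd, hdeg]
          by_cases hu : ((Jᶜ \ M') ∪ (J \ P')) ∪ (M ∪ P) = Finset.univ
          · rw [if_pos hu, if_pos ((hcond M M' hMmem hM'mem).mp ⟨hd, hu⟩)]
          · rw [if_neg hu, if_neg]
            exact fun hc => hu ((hcond M M' hMmem hM'mem).mpr hc).2
        · rw [if_neg hd, map_zero, if_neg]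
          intro hc
          exact hd ((hcond M M' hMmem hM'mem).mpr hc).1
      rw [Finset.sum_congr rfl hterm]
      by_cases hPP : P = P'
      · rw [if_pos hPP]
        have hsm : ∀ M' ∈ (Jᶜ).powerset,
            (if M' = M ∧ P = P' then (1 : ZMod 2) else 0) •
              (eMon (M' ∪ L') ⊗ₜ[ZMod 2] eMon ((Jᶜ \ M) ∪ (J \ N)))
            = if M' = M then eMon (M' ∪ L') ⊗ₜ[ZMod 2] eMon ((Jᶜ \ M) ∪ (J \ N))
              else 0 := by
          intro M' _
          by_cases h : M' = M <;> simp [h, hPP]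
        rw [Finset.sum_congr rfl hsm]
        rw [Finset.sum_ite_eq' ((Jᶜ).powerset) M
          (fun M' => eMon (M' ∪ L') ⊗ₜ[ZMod 2] eMon ((Jᶜ \ M) ∪ (J \ N)))]
        rw [if_pos (Finset.mem_powerset.mpr hMmem)]
      · simp [hPP]
    rw [Finset.sum_congr rfl step]
    by_cases hPP : P = P' <;> simp [hPP]
  constructor
  · intro L L' N hL hL' hN
    have := key L L L' N hL hL hL' hN
    simpa using this
  · intro L L' hL hL'
    by_cases h : L = L'
    · subst h
      simpa using key L L L L hL hL hL hL
    · have := key L' L L L' hL' hL hL hL'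
      rw [if_neg (fun hc => h hc.symm)] at this
      rw [this, if_neg h]
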